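/- Let F be a field and n a positive integer such that the set μ_n(F) = {x ∈ F : x^n = 1} has exactly n elements. Let Y be a free ℤ-module of finite rank and L ⊆ Y a submodule with n·Y ⊆ L. Regard the unit group Fˣ as a ℤ-module and form the tensor products L ⊗_ℤ Fˣ and Y ⊗_ℤ Fˣ. Let f : L ⊗_ℤ Fˣ → Y ⊗_ℤ Fˣ be the map induced by the inclusion L ↪ Y, and let g : Y ⊗_ℤ Fˣ → L ⊗_ℤ Fˣ be the map induced by the homomorphism Y → L, y ↦ n·y. Then the kernel of f equals the image under g of the n-torsion subgroup {t ∈ Y ⊗_ℤ Fˣ : n·t = 0}; in particular, ker(f) is contained in the image of g. -/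

import Mathlib

lemma root_lemma (F : Type*) [Field F] (n : ℕ) (hn : 0 < n)
    (hμ : Nat.card {x : F // x ^ n = 1} = n)
    (a c : ℤ) (hac : a * c = (n : ℤ)) (ζ : Fˣ) (hζ : ζ ^ a = 1) : ∃ ω : Fˣ, ω ^ c = ζ := by
  set G := rootsOfUnity n F with hG
  have hcard : Nat.card G = n := by
    rw [← hμ]
    refine Nat.card_congr ?_
    refine Equiv.symm ⟨fun x => ⟨Units.mk0 x.1 ?_, ?_⟩, fun u => ⟨(u.1 : Fˣ), ?_⟩, ?_, ?_⟩
    · intro h0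
      have := x.2
      rw [h0] at this
      simp [zero_pow hn.ne'] at this
    · rw [mem_rootsOfUnity]
      ext
      push_cast
      exact x.2
    · have h := (mem_rootsOfUnity n u.1).mp u.2
      have : ((u.1 : Fˣ) : F) ^ n = 1 := by
        rw [← Units.val_pow_eq_pow_val, h, Units.val_one]
      exact this
    · intro x; ext; simp
    · intro u; ext; simp
  have hfin : Finite G := Nat.finite_of_card_ne_zero (by omega)
  have hcyc : IsCyclic G := isCyclic_of_subgroup_isDomain ((Units.coeHom F).comp G.subtype)
    (fun x y hxy => by
      apply Subtype.ext
      apply Units.ext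
      exact hxy)
  obtain ⟨γ, hγ⟩ := hcyc.exists_generator
  have hord : orderOf γ = n := by
    rw [orderOf_eq_card_of_forall_mem_zpowers hγ, hcard]
  have ha : a ≠ 0 := by rintro rfl; simp at hac; omega
  have hζG : ζ ∈ G := by
    rw [hG, mem_rootsOfUnity]
    have : ζ ^ (n : ℤ) = 1 := by rw [← hac, zpow_mul, hζ, one_zpow]
    exact_mod_cast this
  obtain ⟨k, hk⟩ := hγ ⟨ζ, hζG⟩
  replace hk : γ ^ k = ⟨ζ, hζG⟩ := hk
  have h1 : γ ^ (k * a) = 1 := by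
    rw [zpow_mul, hk]
    apply Subtype.ext
    rw [SubgroupClass.coe_zpow]
    exact hζ
  have h2 : (n : ℤ) ∣ k * a := by
    rw [← hord]
    exact orderOf_dvd_iff_zpow_eq_one.mpr h1
  obtain ⟨t, ht⟩ := h2
  have hk' : k = c * t := by
    have : k * a = (c * t) * a := by rw [ht, ← hac]; ring
    exact mul_right_cancel₀ ha this
  refine ⟨((γ ^ t : G) : Fˣ), ?_⟩
  rw [← SubgroupClass.coe_zpow, ← zpow_mul, show t * c = k by rw [hk']; ring, hk]
open scoped TensorProduct

lemma tensor_repr {P : Type*} [AddCommGroup P] {M : Type*} [AddCommGroup M]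
    {κ : Type*} [Fintype κ] (b : Module.Basis κ ℤ P) (x : P ⊗[ℤ] M) :
    ∃ u : κ → M, x = ∑ i, b i ⊗ₜ[ℤ] u i := by
  induction x using TensorProduct.induction_on with
  | zero => exact ⟨0, by simp⟩
  | tmul p v =>
    refine ⟨fun i => b.repr p i • v, ?_⟩
    conv_lhs => rw [← b.sum_repr p]
    rw [TensorProduct.sum_tmul]
    refine Finset.sum_congr rfl (fun i _ => ?_)
    dsimp only
    exact TensorProduct.smul_tmul (R := ℤ) _ _ _
  | add x y hx hy =>
    obtain ⟨u, hu⟩ := hx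
    obtain ⟨u', hu'⟩ := hy
    refine ⟨u + u', ?_⟩
    simp [hu, hu', TensorProduct.tmul_add, Finset.sum_add_distrib]

noncomputable def coordMap {P : Type*} [AddCommGroup P] {M : Type*}
    [AddCommGroup M] {κ : Type*} (b : Module.Basis κ ℤ P) (i : κ) :
    P ⊗[ℤ] M →ₗ[ℤ] M :=
  TensorProduct.lift ((LinearMap.lsmul ℤ M).comp (b.coord i))

lemma coordMap_tmul {P : Type*} [AddCommGroup P] {M : Type*}
    [AddCommGroup M] {κ : Type*} (b : Module.Basis κ ℤ P) (i : κ) (p : P) (v : M) :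
    coordMap b i (p ⊗ₜ[ℤ] v) = b.repr p i • v := by
  rw [coordMap]
  erw [TensorProduct.lift.tmul]
  rfl

lemma coordMap_sum {P : Type*} [AddCommGroup P] {M : Type*}
    [AddCommGroup M] {κ : Type*} [DecidableEq κ] {m : ℕ}
    (b : Module.Basis κ ℤ P) (e : Fin m ↪ κ) (v : Fin m → M) (k : Fin m) :
    coordMap b (e k) (∑ i, b (e i) ⊗ₜ[ℤ] v i) = v k := by
  rw [map_sum, Finset.sum_eq_single k]
  · rw [coordMap_tmul, Module.Basis.repr_self, Finsupp.single_eq_same]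
    exact one_smul ℤ _
  · intro j _ hj
    rw [coordMap_tmul, Module.Basis.repr_self, Finsupp.single_eq_of_ne' (fun h => hj (e.injective h))]
    exact zero_smul ℤ _
  · intro h; exact absurd (Finset.mem_univ k) h

open scoped TensorProduct

theorem stmt_0 (F : Type*) [Field F] (n : ℕ) (hn : 0 < n)
    (hμ : Nat.card {x : F // x ^ n = 1} = n)
    (Y : Type*) [AddCommGroup Y] [Module.Free ℤ Y] [Module.Finite ℤ Y]
    (L : AddSubgroup Y) (hL : ∀ y : Y, (n : ℤ) • y ∈ L)
    (ι : Y →ₗ[ℤ] L) (hι : ∀ y : Y, (ι y : Y) = (n : ℤ) • y) :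
    LinearMap.ker (TensorProduct.map (AddSubgroup.subtype L).toIntLinearMap
        (LinearMap.id : Additive Fˣ →ₗ[ℤ] Additive Fˣ)) =
      Submodule.map (TensorProduct.map ι (LinearMap.id : Additive Fˣ →ₗ[ℤ] Additive Fˣ))
        (Submodule.torsionBy ℤ (Y ⊗[ℤ] Additive Fˣ) (n : ℤ)) ∧
    LinearMap.ker (TensorProduct.map (AddSubgroup.subtype L).toIntLinearMap
        (LinearMap.id : Additive Fˣ →ₗ[ℤ] Additive Fˣ)) ≤
      LinearMap.range (TensorProduct.map ι
        (LinearMap.id : Additive Fˣ →ₗ[ℤ] Additive Fˣ)) := by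
  classical
  set M := Additive Fˣ with hM
  set f := TensorProduct.map (AddSubgroup.subtype L).toIntLinearMap
      (LinearMap.id : M →ₗ[ℤ] M) with hf
  set g := TensorProduct.map ι (LinearMap.id : M →ₗ[ℤ] M) with hg
  -- divisibility property of roots of unity
  have hdiv : ∀ a c : ℤ, a * c = (n : ℤ) → ∀ u : M, a • u = 0 → ∃ w : M, c • w = u := by
    intro a c hac u hu
    have hu' : (Additive.toMul u) ^ a = 1 := by
      rw [← toMul_zsmul, hu]; rfl
    obtain ⟨ω, hω⟩ := root_lemma F n hn hμ a c hac (Additive.toMul u) hu'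
    refine ⟨Additive.ofMul ω, ?_⟩
    apply Additive.toMul.injective
    rw [toMul_zsmul]
    exact hω
  -- f ∘ g is multiplication by n
  have hcomp : ∀ t : Y ⊗[ℤ] M, f (g t) = (n : ℤ) • t := by
    intro t
    induction t using TensorProduct.induction_on with
    | zero => simp
    | tmul y v =>
      have h1 : f (g (y ⊗ₜ[ℤ] v)) = ((ι y : Y)) ⊗ₜ[ℤ] v := rfl
      rw [h1, hι y]
      exact (TensorProduct.smul_tmul' (n : ℤ) y v).symm
    | add s t hs ht =>
      rw [map_add, map_add, hs, ht, smul_add]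
  -- Smith normal form
  obtain ⟨m, snf⟩ := Submodule.smithNormalForm (Module.Free.chooseBasis ℤ Y)
    (AddSubgroup.toIntSubmodule L)
  set κ := Module.Free.ChooseBasisIndex ℤ Y
  set bY := snf.bM with hbY
  let bL : Module.Basis (Fin m) ℤ L := snf.bN
  have hsnf : ∀ i, ((bL i : Y)) = snf.a i • bY (snf.f i) := snf.snf
  -- the embedding is surjective
  have hsurj : Function.Surjective snf.f := by
    intro i
    by_contra hi
    have hi' : i ∉ Set.range ⇑snf.f := by
      rintro ⟨j, rfl⟩; exact hi ⟨j, rfl⟩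
    have hyN : (n : ℤ) • bY i ∈ AddSubgroup.toIntSubmodule L := hL _
    have h0 := snf.repr_eq_zero_of_notMem_range ⟨_, hyN⟩ hi'
    simp only [map_smul, Finsupp.smul_apply, Module.Basis.repr_self, Finsupp.single_eq_same,
      smul_eq_mul, mul_one] at h0
    rw [hbY, Module.Basis.repr_self, Finsupp.single_eq_same, mul_one] at h0
    omega
  -- coefficients
  set c : Fin m → ℤ := fun i => snf.bN.repr (ι (bY (snf.f i))) i with hc
  have hkey : ∀ i j : Fin m, (if snf.f j = snf.f i then (n : ℤ) else 0)
      = snf.a i * snf.bN.repr (ι (bY (snf.f j))) i := by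
    intro i j
    have h := snf.repr_apply_embedding_eq_repr_smul (m := ι (bY (snf.f j))) (i := i)
    have h2 : snf.bN.repr (snf.a i • ι (bY (snf.f j))) i
        = snf.a i * snf.bN.repr (ι (bY (snf.f j))) i := by
      have h4 := map_smul snf.bN.repr (snf.a i) (ι (bY (snf.f j)))
      exact (congrArg (fun x => x i) h4).trans (by rw [Finsupp.smul_apply, smul_eq_mul])
    have h3 : (snf.bM.repr ((ι (bY (snf.f j)) : Y))) (snf.f i)
        = if snf.f j = snf.f i then (n : ℤ) else 0 := by
      rw [hι, map_smul, Finsupp.smul_apply, Module.Basis.repr_self, Finsupp.single_apply, smul_eq_mul]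
      split <;> simp
    exact h3.symm.trans (h.trans h2)
  have hac : ∀ i, snf.a i * c i = (n : ℤ) := by
    intro i
    have := hkey i i
    rw [if_pos rfl] at this
    exact this.symm
  have hcj : ∀ i j, j ≠ i → snf.bN.repr (ι (bY (snf.f j))) i = 0 := by
    intro i j hij
    have hane : snf.a i ≠ 0 := by
      intro h0
      have := hac i
      rw [h0, zero_mul] at this
      omega
    have := hkey i j
    rw [if_neg (fun h => hij (snf.f.injective h))] at this
    exact (mul_eq_zero.mp this.symm).resolve_left hane
  have hzeq : ∀ j, ι (bY (snf.f j)) = c j • snf.bN j := by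
    intro j
    apply snf.bN.repr.injective
    ext i
    rw [map_smul, Finsupp.smul_apply, Module.Basis.repr_self, smul_eq_mul, Finsupp.single_apply]
    by_cases hij : j = i
    · subst hij
      rw [if_pos rfl, mul_one, hc]
    · rw [if_neg hij, mul_zero]
      exact hcj i j hij
  -- the hard inclusion : ker f ⊆ range g
  have hmain : ∀ x : (↥L) ⊗[ℤ] M, f x = 0 → ∃ t, g t = x := by
    intro x hx
    obtain ⟨u, hu⟩ := tensor_repr bL x
    have hfx : f x = ∑ i, bY (snf.f i) ⊗ₜ[ℤ] (snf.a i • u i) := by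
      rw [hu, map_sum]
      refine Finset.sum_congr rfl (fun i _ => ?_)
      have h1 : f (bL i ⊗ₜ[ℤ] u i) = ((bL i : Y)) ⊗ₜ[ℤ] u i := rfl
      rw [h1, hsnf i]
      exact TensorProduct.smul_tmul (R := ℤ) (R' := ℤ) (snf.a i) (bY (snf.f i)) (u i)
    have hau : ∀ k, snf.a k • u k = 0 := by
      intro k
      have h2 := coordMap_sum bY snf.f (fun i => snf.a i • u i) k
      rw [← hfx, hx, map_zero] at h2
      exact h2.symm
    choose w hw using fun k => hdiv _ _ (hac k) _ (hau k)
    refine ⟨∑ i, bY (snf.f i) ⊗ₜ[ℤ] w i, ?_⟩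
    rw [map_sum, hu]
    refine Finset.sum_congr rfl (fun i _ => ?_)
    have h1 : g (bY (snf.f i) ⊗ₜ[ℤ] w i) = (ι (bY (snf.f i))) ⊗ₜ[ℤ] w i := rfl
    rw [h1, hzeq i, ← hw i]
    exact TensorProduct.smul_tmul (R := ℤ) (R' := ℤ) (c i) (snf.bN i) (w i)
  have hker : ∀ x : (↥L) ⊗[ℤ] M, f x = 0 → ∃ t, (n : ℤ) • t = 0 ∧ g t = x := by
    intro x hx
    obtain ⟨t, ht⟩ := hmain x hx
    refine ⟨t, ?_, ht⟩
    rw [← hcomp t, ht, hx]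
  constructor
  · apply le_antisymm
    · intro x hx
      rw [LinearMap.mem_ker] at hx
      obtain ⟨t, ht0, htx⟩ := hker x hx
      exact Submodule.mem_map.mpr ⟨t, (Submodule.mem_torsionBy_iff _ _).mpr ht0, htx⟩
    · rintro x ⟨t, ht, rfl⟩
      rw [LinearMap.mem_ker, hcomp t]
      exact (Submodule.mem_torsionBy_iff _ _).mp ht
  · intro x hx
    rw [LinearMap.mem_ker] at hx
    obtain ⟨t, ht⟩ := hmain x hx
    exact ⟨t, ht⟩
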